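/- arXiv:0804.3816 — 4 statements merged into one kernel-verified Lean document; each statement's English description precedes it below -/
import Mathlib

section
/- For integers 0 ≤ k ≤ r and j ∈ {0,...,r}, let S^j_k(x) denote the k-th elementary symmetric polynomial in the variables x_0, ..., x_r with x_j omitted. If ξ is a primitive (r+1)-th root of unity, then S^j_k(ξ^0, ξ^1, ..., ξ^r) = (−1)^k ξ^{k·j}. -/
open Polynomial Finset

private lemma prod_lin_aux (r : ℕ) (ξ : ℂ) (hξ : IsPrimitiveRoot ξ (r + 1)) :
    ∏ i ∈ Finset.range (r + 1), (X - C (ξ ^ i)) = X ^ (r + 1) - 1 := by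
  rw [Polynomial.X_pow_sub_one_eq_prod (Nat.succ_pos r) hξ]
  refine Finset.prod_bij (fun a _ => ξ ^ a) ?_ ?_ ?_ (fun a _ => rfl)
  · intro a ha
    rw [Polynomial.mem_nthRootsFinset (Nat.succ_pos r)]
    rw [← pow_mul, mul_comm, pow_mul, hξ.pow_eq_one, one_pow]
  · intro a ha b hb hab
    exact hξ.pow_inj (Finset.mem_range.mp ha) (Finset.mem_range.mp hb) hab
  · intro z hz
    rw [Polynomial.mem_nthRootsFinset (Nat.succ_pos r)] at hz
    obtain ⟨i, hi, rfl⟩ := hξ.eq_pow_of_pow_eq_one hz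
    exact ⟨i, Finset.mem_range.mpr hi, rfl⟩

private lemma full_sum_aux (r k : ℕ) (ξ : ℂ) (hξ : IsPrimitiveRoot ξ (r + 1))
    (hk1 : 1 ≤ k) (hk : k ≤ r) :
    ∑ t ∈ (Finset.range (r + 1)).powersetCard k, ∏ l ∈ t, ξ ^ l = 0 := by
  have hcard : (r + 1 - k) ≤ #(Finset.range (r + 1)) := by
    rw [Finset.card_range]; omega
  have h := Finset.prod_X_add_C_coeff (Finset.range (r + 1)) (fun i => -(ξ ^ i)) hcard
  have hprod : (∏ i ∈ Finset.range (r + 1), (X + C (-(ξ ^ i)))) = X ^ (r + 1) - 1 := by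
    rw [← prod_lin_aux r ξ hξ]
    refine Finset.prod_congr rfl fun i _ => ?_
    rw [map_neg, sub_eq_add_neg]
  rw [hprod] at h
  have hcoeff : (X ^ (r + 1) - (1 : ℂ[X])).coeff (r + 1 - k) = 0 := by
    rw [Polynomial.coeff_sub, Polynomial.coeff_X_pow, Polynomial.coeff_one,
      if_neg (by omega), if_neg (by omega), sub_zero]
  rw [hcoeff] at h
  have hck : #(Finset.range (r + 1)) - (r + 1 - k) = k := by
    rw [Finset.card_range]; omega
  rw [hck] at h
  have hneg : ∀ t ∈ (Finset.range (r + 1)).powersetCard k,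
      (∏ i ∈ t, -(ξ ^ i)) = (-1 : ℂ) ^ k * ∏ i ∈ t, ξ ^ i := by
    intro t ht
    have : #t = k := (Finset.mem_powersetCard.mp ht).2
    rw [Finset.prod_congr rfl (fun i _ => (neg_one_mul (ξ ^ i)).symm),
      Finset.prod_mul_distrib, Finset.prod_const, this]
  rw [Finset.sum_congr rfl hneg, ← Finset.mul_sum] at h
  have hne : ((-1 : ℂ) ^ k) ≠ 0 := by
    simp
  exact (mul_eq_zero.mp h.symm).resolve_left hne

/-- If `ξ` is a primitive `(r+1)`-th root of unity, then the `k`-th elementary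
symmetric polynomial in the variables `ξ^0, …, ξ^r` with `ξ^j` omitted equals
`(−1)^k ξ^(k·j)`. -/
theorem stmt_4 (r : ℕ) (hr : 0 < r) (ξ : ℂ) (hξ : IsPrimitiveRoot ξ (r + 1))
    (j k : ℕ) (hj : j ≤ r) (hk : k ≤ r) :
    ∑ t ∈ ((Finset.range (r + 1)).erase j).powersetCard k, ∏ l ∈ t, ξ ^ l
      = (-1 : ℂ) ^ k * ξ ^ (k * j) := by
  induction k with
  | zero => simp
  | succ k ih =>
    have ihk := ih (by omega)
    have hjmem : j ∈ Finset.range (r + 1) := Finset.mem_range.mpr (by omega)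
    have hins : insert j ((Finset.range (r + 1)).erase j) = Finset.range (r + 1) :=
      Finset.insert_erase hjmem
    have hfull := full_sum_aux r (k + 1) ξ hξ (by omega) (by omega)
    rw [← hins, Finset.powersetCard_succ_insert (Finset.notMem_erase _ _),
      Finset.sum_union ?hdis] at hfull
    case hdis =>
      rw [Finset.disjoint_right]
      intro t ht ht'
      obtain ⟨u, hu, rfl⟩ := Finset.mem_image.mp ht
      have hu' := (Finset.mem_powersetCard.mp hu).1
      have : j ∈ insert j u := Finset.mem_insert_self _ _
      have := (Finset.mem_powersetCard.mp ht').1 this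
      exact Finset.notMem_erase j _ this
    have himg : ∑ t ∈ Finset.image (insert j)
          (((Finset.range (r + 1)).erase j).powersetCard k), ∏ l ∈ t, ξ ^ l
        = ξ ^ j * ∑ t ∈ ((Finset.range (r + 1)).erase j).powersetCard k, ∏ l ∈ t, ξ ^ l := by
      rw [Finset.sum_image ?hinj]
      case hinj =>
        intro a ha b hb hab
        have haj : j ∉ a := fun h => Finset.notMem_erase j _
          ((Finset.mem_powersetCard.mp ha).1 h)
        have hbj : j ∉ b := fun h => Finset.notMem_erase j _
          ((Finset.mem_powersetCard.mp hb).1 h)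
        rw [← Finset.erase_insert haj, ← Finset.erase_insert hbj, hab]
      rw [Finset.mul_sum]
      refine Finset.sum_congr rfl fun t ht => ?_
      have htj : j ∉ t := fun h => Finset.notMem_erase j _
        ((Finset.mem_powersetCard.mp ht).1 h)
      rw [Finset.prod_insert htj]
    rw [himg, ihk] at hfull
    have : ∑ t ∈ ((Finset.range (r + 1)).erase j).powersetCard (k + 1), ∏ l ∈ t, ξ ^ l
        = -(ξ ^ j * ((-1 : ℂ) ^ k * ξ ^ (k * j))) := eq_neg_of_add_eq_zero_left hfull
    rw [this, pow_succ, Nat.succ_mul, pow_add]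
    ring
end

section
/- Let ξ be a primitive (r+1)-th root of unity and for 1 ≤ k ≤ r define g_k(ξ) = (1/(ξ^k − 1)) · (∑_{μ=1}^r μ ξ^{μk}) · (∑_{μ=1}^r μ ξ^{−μk}). Then ∑_{k=1}^{r} (ξ^k + 1)·g_k(ξ) = 0. -/
/-- With `ξ` a primitive `(r+1)`-th root of unity and
`g_k(ξ) = (ξ^k−1)⁻¹ (∑_{μ=1}^r μ ξ^{μk})(∑_{μ=1}^r μ ξ^{−μk})`, one has
`∑_{k=1}^r (ξ^k + 1) g_k(ξ) = 0`. -/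
theorem stmt_6 (r : ℕ) (hr : 0 < r) (ξ : ℂ) (hξ : IsPrimitiveRoot ξ (r + 1)) :
    ∑ k ∈ Finset.Icc 1 r, (ξ ^ k + 1) *
      ((ξ ^ k - 1)⁻¹ * (∑ μ ∈ Finset.Icc 1 r, (μ : ℂ) * ξ ^ (μ * k))
        * (∑ μ ∈ Finset.Icc 1 r, (μ : ℂ) * ξ ^ (-((μ : ℤ) * k)))) = 0 := by
  have hξ0 : ξ ≠ 0 := hξ.ne_zero (Nat.succ_ne_zero r)
  have hξ1 : ξ ^ (r + 1) = 1 := hξ.pow_eq_one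
  set f : ℕ → ℂ := fun k => (ξ ^ k + 1) *
      ((ξ ^ k - 1)⁻¹ * (∑ μ ∈ Finset.Icc 1 r, (μ : ℂ) * ξ ^ (μ * k))
        * (∑ μ ∈ Finset.Icc 1 r, (μ : ℂ) * ξ ^ (-((μ : ℤ) * k)))) with hf
  have key : ∀ k, 1 ≤ k → k ≤ r → f (r + 1 - k) = -f k := by
    intro k hk1 hkr
    have hinv : ∀ m : ℕ, ξ ^ (m * (r + 1 - k)) = ξ ^ (-((m : ℤ) * k)) := by
      intro m
      have h1 : ξ ^ (m * (r + 1 - k)) * ξ ^ (m * k) = 1 := by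
        rw [← pow_add, ← Nat.mul_add, show r + 1 - k + k = r + 1 from by omega,
          mul_comm, pow_mul, hξ1, one_pow]
      have h2 : ξ ^ (-((m : ℤ) * k)) = (ξ ^ (m * k))⁻¹ := by
        rw [zpow_neg]
        norm_cast
      rw [h2, inv_eq_one_div, eq_div_iff (pow_ne_zero _ hξ0)]
      exact h1
    have hinv2 : ∀ m : ℕ, ξ ^ (-((m : ℤ) * ((r + 1 - k : ℕ) : ℤ))) = ξ ^ (m * k) := by
      intro m
      have hc : ((m : ℤ) * ((r + 1 - k : ℕ) : ℤ)) = ((m * (r + 1 - k) : ℕ) : ℤ) := by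
        push_cast; ring
      rw [hc, zpow_neg, zpow_natCast, hinv m, zpow_neg, inv_inv]
      norm_cast
    have hA : (∑ μ ∈ Finset.Icc 1 r, (μ : ℂ) * ξ ^ (μ * (r + 1 - k)))
        = ∑ μ ∈ Finset.Icc 1 r, (μ : ℂ) * ξ ^ (-((μ : ℤ) * k)) := by
      refine Finset.sum_congr rfl fun μ _ => ?_
      rw [hinv μ]
    have hB : (∑ μ ∈ Finset.Icc 1 r, (μ : ℂ) * ξ ^ (-((μ : ℤ) * ((r + 1 - k : ℕ) : ℤ))))
        = ∑ μ ∈ Finset.Icc 1 r, (μ : ℂ) * ξ ^ (μ * k) := by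
      refine Finset.sum_congr rfl fun μ _ => ?_
      rw [hinv2 μ]
    have hne1 : ξ ^ k ≠ 1 := hξ.pow_ne_one_of_pos_of_lt (by omega) (by omega)
    have hy0 : ξ ^ k ≠ 0 := pow_ne_zero _ hξ0
    have hxk : ξ ^ (r + 1 - k) = (ξ ^ k)⁻¹ := by
      have h1 : ξ ^ (r + 1 - k) * ξ ^ k = 1 := by
        rw [← pow_add, show r + 1 - k + k = r + 1 from by omega, hξ1]
      rw [inv_eq_one_div, eq_div_iff (pow_ne_zero _ hξ0)]
      exact h1
    simp only [hf]
    rw [hA, hB, hxk]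
    have hne1' : (ξ ^ k)⁻¹ - 1 ≠ 0 := by
      intro h
      apply hne1
      have : (ξ ^ k)⁻¹ = 1 := by linear_combination h
      field_simp at this
      exact this.symm
    have hne1'' : ξ ^ k - 1 ≠ 0 := sub_ne_zero.mpr hne1
    generalize (∑ μ ∈ Finset.Icc 1 r, (μ : ℂ) * ξ ^ (μ * k)) = A
    generalize (∑ μ ∈ Finset.Icc 1 r, (μ : ℂ) * ξ ^ (-((μ : ℤ) * k))) = B
    have hfac : ((ξ ^ k)⁻¹ + 1) * ((ξ ^ k)⁻¹ - 1)⁻¹ = -((ξ ^ k + 1) * (ξ ^ k - 1)⁻¹) := by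
      rw [mul_inv_eq_iff_eq_mul₀ hne1']
      field_simp
      ring
    linear_combination A * B * hfac
  have hS : ∑ k ∈ Finset.Icc 1 r, f k = ∑ k ∈ Finset.Icc 1 r, f (r + 1 - k) := by
    refine Finset.sum_nbij' (i := fun k => r + 1 - k) (j := fun k => r + 1 - k)
      (fun a ha => ?_) (fun a ha => ?_) (fun a ha => ?_) (fun a ha => ?_) (fun a ha => ?_) <;>
      simp only [Finset.mem_Icc] at *
    · omega
    · omega
    · omega
    · omega
    · congr 1
      omega
  have hS2 : ∑ k ∈ Finset.Icc 1 r, f k = -∑ k ∈ Finset.Icc 1 r, f k := by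
    conv_lhs => rw [hS]
    rw [← Finset.sum_neg_distrib]
    refine Finset.sum_congr rfl fun k hk => ?_
    simp only [Finset.mem_Icc] at hk
    exact key k hk.1 hk.2
  have h2 : (2 : ℂ) * ∑ k ∈ Finset.Icc 1 r, f k = 0 := by linear_combination hS2
  have := mul_eq_zero.mp h2
  rcases this with h | h
  · exact absurd h two_ne_zero
  · exact h
end

section
/- Let ξ be a primitive (r+1)-th root of unity and define g_k(ξ) = (1/(ξ^k − 1)) · (∑_{μ=1}^r μ ξ^{μk}) · (∑_{μ=1}^r μ ξ^{−μk}) for 1 ≤ k ≤ r. Then ∑_{k=1}^{r} g_k(ξ) = −(r+2)(r+1)² r / 24. -/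
open Finset
lemma h1 (m : ℕ) : ∑ μ ∈ Icc 1 m, (μ:ℂ) = m*(m+1)/2 := by
  induction m with
  | zero => simp
  | succ m ih => rw [Finset.sum_Icc_succ_top (by omega), ih]; push_cast; ring
lemma h2 (m : ℕ) : ∑ μ ∈ Icc 1 m, (μ:ℂ)^2 = m*(m+1)*(2*m+1)/6 := by
  induction m with
  | zero => simp
  | succ m ih => rw [Finset.sum_Icc_succ_top (by omega), ih]; push_cast; ring
lemma h3 (m : ℕ) : ∑ μ ∈ Icc 1 m, (μ:ℂ)^3 = m^2*(m+1)^2/4 := by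
  induction m with
  | zero => simp
  | succ m ih => rw [Finset.sum_Icc_succ_top (by omega), ih]; push_cast; ring

lemma hcut (r b : ℕ) (hb1 : 1 ≤ b) (hb2 : b ≤ r) :
    ∑ a ∈ Icc 1 r, (if r+1 ≤ a+b then (a:ℂ) else 0)
      = (r:ℂ)*(r+1)/2 - ((r:ℂ)-b)*((r:ℂ)-b+1)/2 := by
  rw [← Finset.sum_filter]
  have hf : (Icc 1 r).filter (fun a => r+1 ≤ a+b) = Finset.Ioc (r-b) r := by
    ext x; simp [Finset.mem_filter, Finset.mem_Icc, Finset.mem_Ioc]; omega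
  rw [hf]
  have hc : ∑ a ∈ Finset.Ioc 0 (r-b), (a:ℂ) + ∑ a ∈ Finset.Ioc (r-b) r, (a:ℂ)
      = ∑ a ∈ Finset.Ioc 0 r, (a:ℂ) :=
    Finset.sum_Ioc_consecutive _ (by omega) (by omega)
  have hicc : ∀ m : ℕ, Finset.Ioc 0 m = Finset.Icc 1 m := by
    intro m; ext x; simp [Finset.mem_Ioc, Finset.mem_Icc]; omega
  rw [hicc] at hc
  rw [hicc] at hc
  rw [h1, h1] at hc
  have hcast : ((r - b : ℕ) : ℂ) = (r:ℂ) - b := by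
    push_cast [Nat.cast_sub hb2]; ring
  rw [hcast] at hc
  linear_combination hc

lemma hmodsplit (r a b : ℕ) (ha : a ∈ Icc 1 r) (hb : b ∈ Icc 1 r) :
    (((a+b) % (r+1) : ℕ) : ℂ)
      = (a:ℂ) + (b:ℂ) - (if r+1 ≤ a+b then ((r:ℂ)+1) else 0) := by
  simp only [Finset.mem_Icc] at ha hb
  by_cases h : r+1 ≤ a+b
  · rw [if_pos h]
    have : (a+b) % (r+1) = a+b-(r+1) := by
      rw [Nat.mod_eq_sub_mod h, Nat.mod_eq_of_lt (by omega)]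
    rw [this, Nat.cast_sub (by omega)]; push_cast; ring
  · rw [if_neg h, Nat.mod_eq_of_lt (by omega)]; push_cast; ring

lemma ccore (r : ℕ) :
    ∑ b ∈ Icc 1 r, ∑ a ∈ Icc 1 r, (b:ℂ) * (a:ℂ) * (((a+b) % (r+1) : ℕ) : ℂ)
      = ((r:ℂ)+1)^2*r*((r:ℂ)-1)*(3*r+2)/24 := by
  have key : ∀ b ∈ Icc 1 r,
      ∑ a ∈ Icc 1 r, (b:ℂ) * (a:ℂ) * (((a+b) % (r+1) : ℕ) : ℂ)
        = ((r:ℂ)*(r+1)*(2*r+1)/6 - ((r:ℂ)+1)*((r:ℂ)*(r+1)/2) + ((r:ℂ)+1)^2*r/2) * (b:ℂ)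
          + ((r:ℂ)*(r+1)/2 - ((r:ℂ)+1)*(2*(r:ℂ)+1)/2) * (b:ℂ)^2
          + (((r:ℂ)+1)/2) * (b:ℂ)^3 := by
    intro b hb
    simp only [Finset.mem_Icc] at hb
    have step : ∀ a ∈ Icc 1 r, (b:ℂ) * (a:ℂ) * (((a+b) % (r+1) : ℕ) : ℂ)
        = (b:ℂ)*(a:ℂ)^2 + (b:ℂ)^2*(a:ℂ)
          - ((r:ℂ)+1)*(b:ℂ)*(if r+1 ≤ a+b then (a:ℂ) else 0) := by
      intro a ha
      rw [hmodsplit r a b ha (Finset.mem_Icc.mpr hb)]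
      by_cases h : r+1 ≤ a+b
      · rw [if_pos h, if_pos h]; ring
      · rw [if_neg h, if_neg h]; ring
    rw [Finset.sum_congr rfl step]
    simp only [Finset.sum_add_distrib, Finset.sum_sub_distrib, ← Finset.mul_sum]
    rw [h1, h2, hcut r b hb.1 hb.2]
    ring
  rw [Finset.sum_congr rfl key]
  simp only [Finset.sum_add_distrib, ← Finset.mul_sum]
  rw [h1, h2, h3]
  ring

lemma hpoly (x : ℂ) (m : ℕ) :
    (x-1)^2 * ∑ μ ∈ Icc 1 m, (μ:ℂ) * x^μ = m*x^(m+2) - (m+1)*x^(m+1) + x := by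
  induction m with
  | zero => simp
  | succ m ih =>
    rw [Finset.sum_Icc_succ_top (by omega), mul_add, ih]
    push_cast; ring
lemma hgeom (y : ℂ) (r : ℕ) (hy : y^(r+1) = 1) :
    ∑ k ∈ Icc 1 r, y^k = if y = 1 then (r:ℂ) else -1 := by
  have hins : Finset.Icc 0 r = insert 0 (Finset.Icc 1 r) := by
    ext x; simp [Finset.mem_Icc, Finset.mem_insert]; omega
  have h : ∑ k ∈ Finset.range (r+1), y^k = 1 + ∑ k ∈ Icc 1 r, y^k := by
    rw [Finset.range_eq_Ico, show Finset.Ico 0 (r+1) = Finset.Icc 0 r from rfl, hins,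
      Finset.sum_insert (by simp)]
    simp
  by_cases hy1 : y = 1
  · subst hy1; simp [Nat.card_Icc]
  · rw [if_neg hy1]
    have h0 : ∑ k ∈ Finset.range (r+1), y^k = 0 := by
      rw [geom_sum_eq hy1, hy]; simp
    rw [h0] at h; linear_combination -h

lemma Linv (r : ℕ) (ξ : ℂ) (hξ : IsPrimitiveRoot ξ (r+1)) (k : ℕ) (hk : k ∈ Icc 1 r) :
    (ξ^k - 1)⁻¹ = (1/((r:ℂ)+1)) * ∑ μ ∈ Icc 1 r, (μ:ℂ) * ξ^(μ*k) := by
  simp only [Finset.mem_Icc] at hk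
  have hx1 : ξ^k ≠ 1 := hξ.pow_ne_one_of_pos_of_lt (by omega) (by omega)
  have hxs : ξ^k - 1 ≠ 0 := sub_ne_zero.mpr hx1
  have hsum : ∑ μ ∈ Icc 1 r, (μ:ℂ) * ξ^(μ*k) = ∑ μ ∈ Icc 1 r, (μ:ℂ) * (ξ^k)^μ := by
    refine Finset.sum_congr rfl fun μ _ => ?_
    rw [mul_comm μ k, pow_mul]
  have hxn : (ξ^k)^(r+1) = 1 := by
    rw [← pow_mul, mul_comm, pow_mul, hξ.pow_eq_one, one_pow]
  have hp := hpoly (ξ^k) r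
  have hrhs : (r:ℂ)*(ξ^k)^(r+2) - ((r:ℂ)+1)*(ξ^k)^(r+1) + ξ^k = ((r:ℂ)+1)*(ξ^k - 1) := by
    have h2 : (ξ^k)^(r+2) = ξ^k := by
      rw [show r+2 = (r+1)+1 from rfl, pow_succ, hxn, one_mul]
    rw [h2, hxn]; push_cast; ring
  rw [hrhs] at hp
  have hcancel : (ξ^k - 1) * ∑ μ ∈ Icc 1 r, (μ:ℂ) * (ξ^k)^μ = (r:ℂ)+1 := by
    apply mul_left_cancel₀ hxs
    linear_combination hp
  rw [hsum]
  have hn : ((r:ℂ)+1) ≠ 0 := Nat.cast_add_one_ne_zero r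
  field_simp
  linear_combination -hcancel

lemma Lgeo (r : ℕ) (ξ : ℂ) (hξ : IsPrimitiveRoot ξ (r+1)) (e : ℤ) :
    ∑ k ∈ Icc 1 r, ξ^(e * (k:ℤ)) = if ((r+1:ℕ):ℤ) ∣ e then (r:ℂ) else -1 := by
  have hξ0 : ξ ≠ 0 := by
    intro h; have := hξ.pow_eq_one; rw [h] at this; simp at this
  have hyk : ∀ k : ℕ, ξ^(e * (k:ℤ)) = (ξ^e)^k := by
    intro k; rw [zpow_mul, zpow_natCast]
  have hyn : (ξ^e)^(r+1) = 1 := by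
    rw [← zpow_natCast (ξ^e) (r+1), ← zpow_mul, mul_comm, zpow_mul, zpow_natCast,
      hξ.pow_eq_one, one_zpow]
  rw [Finset.sum_congr rfl fun k _ => hyk k, hgeom _ r hyn]
  by_cases hd : ((r+1:ℕ):ℤ) ∣ e
  · rw [if_pos ((hξ.zpow_eq_one_iff_dvd e).mpr hd), if_pos hd]
  · rw [if_neg (fun h => hd ((hξ.zpow_eq_one_iff_dvd e).mp h)), if_neg hd]

lemma Lmod (r a b : ℕ) (ha : a ∈ Icc 1 r) (hb : b ∈ Icc 1 r) :
    ∑ c ∈ Icc 1 r, (if ((r+1:ℕ):ℤ) ∣ ((a:ℤ)+(b:ℤ)-(c:ℤ)) then (c:ℂ) else 0)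
      = (((a+b) % (r+1) : ℕ) : ℂ) := by
  simp only [Finset.mem_Icc] at ha hb
  have hcond : ∀ c ∈ Icc 1 r,
      (((r+1:ℕ):ℤ) ∣ ((a:ℤ)+(b:ℤ)-(c:ℤ))) ↔ c = (a+b) % (r+1) := by
    intro c hc
    simp only [Finset.mem_Icc] at hc
    have h1 : (((r+1:ℕ):ℤ) ∣ ((a:ℤ)+(b:ℤ)-(c:ℤ))) ↔ c ≡ a+b [MOD r+1] := by
      rw [Nat.modEq_iff_dvd]; push_cast; constructor <;> intro h <;> exact h
    rw [h1, Nat.ModEq]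
    rw [Nat.mod_eq_of_lt (by omega : c < r+1)]
  rw [Finset.sum_congr rfl fun c hc => if_congr (hcond c hc) rfl rfl,
    Finset.sum_ite_eq' (Icc 1 r) ((a+b) % (r+1)) (fun c => (c:ℂ))]
  by_cases hm : (a+b) % (r+1) = 0
  · rw [if_neg (by simp [Finset.mem_Icc]; omega), hm]; simp
  · rw [if_pos (by simp [Finset.mem_Icc]; have := Nat.mod_lt (a+b) (show 0 < r+1 by omega); omega)]


lemma sum4comm (s t u v : Finset ℕ) (F : ℕ → ℕ → ℕ → ℕ → ℂ) :
    ∑ k ∈ s, ∑ b ∈ t, ∑ a ∈ u, ∑ c ∈ v, F k b a c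
      = ∑ b ∈ t, ∑ a ∈ u, ∑ c ∈ v, ∑ k ∈ s, F k b a c := by
  rw [Finset.sum_comm]
  refine Finset.sum_congr rfl fun b _ => ?_
  rw [Finset.sum_comm]
  refine Finset.sum_congr rfl fun a _ => ?_
  rw [Finset.sum_comm]

/-- With `ξ` a primitive `(r+1)`-th root of unity and
`g_k(ξ) = (ξ^k−1)⁻¹ (∑_{μ=1}^r μ ξ^{μk})(∑_{μ=1}^r μ ξ^{−μk})`, one has
`∑_{k=1}^r g_k(ξ) = −(r+2)(r+1)² r / 24`. -/
theorem stmt_7 (r : ℕ) (hr : 0 < r) (ξ : ℂ) (hξ : IsPrimitiveRoot ξ (r + 1)) :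
    ∑ k ∈ Finset.Icc 1 r,
      ((ξ ^ k - 1)⁻¹ * (∑ μ ∈ Finset.Icc 1 r, (μ : ℂ) * ξ ^ (μ * k))
        * (∑ μ ∈ Finset.Icc 1 r, (μ : ℂ) * ξ ^ (-((μ : ℤ) * k))))
      = -((r : ℂ) + 2) * ((r : ℂ) + 1) ^ 2 * (r : ℂ) / 24 := by
  have hn : ((r:ℂ)+1) ≠ 0 := Nat.cast_add_one_ne_zero r
  have hξ0 : ξ ≠ 0 := by
    intro h; have := hξ.pow_eq_one; rw [h] at this; simp at this
  have step1 : ∀ k ∈ Icc 1 r,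
      (ξ ^ k - 1)⁻¹ * (∑ μ ∈ Finset.Icc 1 r, (μ : ℂ) * ξ ^ (μ * k))
        * (∑ μ ∈ Finset.Icc 1 r, (μ : ℂ) * ξ ^ (-((μ : ℤ) * k)))
      = (1/((r:ℂ)+1)) * ∑ b ∈ Icc 1 r, ∑ a ∈ Icc 1 r, ∑ c ∈ Icc 1 r,
          ((b:ℂ)*(a:ℂ)*(c:ℂ)) * ξ ^ ((((a:ℤ)+(b:ℤ)-(c:ℤ))) * (k:ℤ)) := by
    intro k hk
    rw [Linv r ξ hξ k hk]
    have hshape : ∀ X Y Z : ℂ, ((1/((r:ℂ)+1)) * X) * Y * Z = (1/((r:ℂ)+1)) * (X * Y * Z) := by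
      intros; ring
    rw [hshape]
    congr 1
    rw [Finset.sum_mul_sum, Finset.sum_mul]
    refine Finset.sum_congr rfl fun b _ => ?_
    rw [Finset.sum_mul]
    refine Finset.sum_congr rfl fun a _ => ?_
    rw [Finset.mul_sum]
    refine Finset.sum_congr rfl fun c _ => ?_
    have hz : ξ ^ ((((a:ℤ)+(b:ℤ)-(c:ℤ))) * (k:ℤ))
        = ξ^(b*k) * ξ^(a*k) * ξ^(-((c:ℤ) * (k:ℤ))) := by
      rw [← zpow_natCast ξ (b*k), ← zpow_natCast ξ (a*k), ← zpow_add₀ hξ0, ← zpow_add₀ hξ0]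
      congr 1; push_cast; ring
    rw [hz]; ring
  rw [Finset.sum_congr rfl step1, ← Finset.mul_sum, sum4comm]
  have step2 : ∀ b ∈ Icc 1 r, ∀ a ∈ Icc 1 r, ∀ c ∈ Icc 1 r,
      ∑ k ∈ Icc 1 r, ((b:ℂ)*(a:ℂ)*(c:ℂ)) * ξ ^ ((((a:ℤ)+(b:ℤ)-(c:ℤ))) * (k:ℤ))
        = ((b:ℂ)*(a:ℂ)*(c:ℂ)) * (if ((r+1:ℕ):ℤ) ∣ ((a:ℤ)+(b:ℤ)-(c:ℤ)) then (r:ℂ) else -1) := by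
    intro b _ a _ c _
    rw [← Finset.mul_sum, Lgeo r ξ hξ ((a:ℤ)+(b:ℤ)-(c:ℤ))]
  rw [Finset.sum_congr rfl fun b hb => Finset.sum_congr rfl fun a ha =>
    Finset.sum_congr rfl fun c hc => step2 b hb a ha c hc]
  have step3 : ∀ b ∈ Icc 1 r, ∀ a ∈ Icc 1 r,
      ∑ c ∈ Icc 1 r, ((b:ℂ)*(a:ℂ)*(c:ℂ)) * (if ((r+1:ℕ):ℤ) ∣ ((a:ℤ)+(b:ℤ)-(c:ℤ)) then (r:ℂ) else -1)
        = ((r:ℂ)+1) * ((b:ℂ)*(a:ℂ)*((((a+b) % (r+1)):ℕ):ℂ))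
          - ((r:ℂ)*((r:ℂ)+1)/2) * ((b:ℂ)*(a:ℂ)) := by
    intro b hb a ha
    have point : ∀ c ∈ Icc 1 r,
        ((b:ℂ)*(a:ℂ)*(c:ℂ)) * (if ((r+1:ℕ):ℤ) ∣ ((a:ℤ)+(b:ℤ)-(c:ℤ)) then (r:ℂ) else -1)
          = (((r:ℂ)+1)*((b:ℂ)*(a:ℂ))) * (if ((r+1:ℕ):ℤ) ∣ ((a:ℤ)+(b:ℤ)-(c:ℤ)) then (c:ℂ) else 0)
            - ((b:ℂ)*(a:ℂ)) * (c:ℂ) := by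
      intro c _
      by_cases h : ((r+1:ℕ):ℤ) ∣ ((a:ℤ)+(b:ℤ)-(c:ℤ))
      · rw [if_pos h, if_pos h]; ring
      · rw [if_neg h, if_neg h]; ring
    rw [Finset.sum_congr rfl point, Finset.sum_sub_distrib, ← Finset.mul_sum, ← Finset.mul_sum,
      Lmod r a b ha hb, h1]
    ring
  rw [Finset.sum_congr rfl fun b hb => Finset.sum_congr rfl fun a ha => step3 b hb a ha]
  simp only [Finset.sum_sub_distrib, ← Finset.mul_sum]
  rw [ccore r]
  simp only [h1, ← Finset.sum_mul]
  field_simp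
  ring
end

section
/- In the graded commutative ring A = ℤ[h, ξ]/(h^{r+1}, ξ(ξ−h)^{r+1}) (the cohomology ring of X = P_{P^r}(O(−1)^{r+1} ⊕ O)), the element of top degree 2r+1 in the expansion of (1+h)^{r+1}(1+ξ)(1+ξ−h)^{r+1}(2h−ξ) equals −(r+1) · h^r ξ^{r+1}, where h^r ξ^{r+1} is the positive generator of the degree-(2r+1) part. Equivalently, the intersection number (c_{2r}(X)·(2h−ξ)) = −(r+1). -/
open MvPolynomial Finset
set_option maxHeartbeats 1000000
set_option synthInstance.maxHeartbeats 400000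

lemma aux_pow_sub {A : Type*} [CommRing A] (x y : A) (n : ℕ) (e : x^(n+1) = 0) (m : ℕ) :
    x^n * y^m = x^n * (y - x)^m := by
  induction m with
  | zero => simp
  | succ k ih =>
    have h1 : x^n * y^(k+1) = (x^n * y^k) * y := by ring
    rw [h1, ih]
    have h2 : x ^ n * (y - x) ^ k * y = x^n * (y-x)^(k+1) + x^(n+1) * (y-x)^k := by ring
    rw [h2, e]; ring

lemma aux_two_mul_choose_two : ∀ n : ℕ, 2 * n.choose 2 = n * (n-1)
  | 0 => rfl
  | (n+1) => by
    rw [Nat.choose_succ_succ, Nat.mul_add, aux_two_mul_choose_two n, Nat.choose_one_right]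
    cases n with
    | zero => rfl
    | succ m => push_cast [Nat.succ_sub_one]; ring

lemma aux_hom (c a b : ℕ) :
    ((c : MvPolynomial (Fin 2) ℤ) * (X 0 ^ a * (X 1 - X 0) ^ b)).IsHomogeneous (a + b) := by
  have h1 : ((X 1 - X 0 : MvPolynomial (Fin 2) ℤ)).IsHomogeneous 1 :=
    (isHomogeneous_X _ _).sub (isHomogeneous_X _ _)
  have h2 := ((isHomogeneous_X_pow (R := ℤ) 0 a).mul (h1.pow b)).C_mul (c : ℤ)
  rw [C_eq_coe_nat] at h2
  simpa using h2

noncomputable def MM (r a b : ℕ) : MvPolynomial (Fin 2) ℤ :=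
  (((r+1).choose a * (r+1).choose b : ℕ) : MvPolynomial (Fin 2) ℤ) * (X 0 ^ a * (X 1 - X 0) ^ b)

lemma aux_hom_MM (r a b : ℕ) : (MM r a b).IsHomogeneous (a + b) := aux_hom _ a b

lemma aux_expand (r : ℕ) :
    ((1 + X 0) ^ (r + 1) * (1 + X 1) * (1 + X 1 - X 0) ^ (r + 1) : MvPolynomial (Fin 2) ℤ)
      = ∑ a ∈ range (r+2), ∑ b ∈ range (r+2), (MM r a b + MM r a b * X 1) := by
  have h1 : ((1 + X 0 : MvPolynomial (Fin 2) ℤ)) ^ (r+1)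
      = ∑ a ∈ range (r+2), X 0 ^ a * 1 ^ (r+1-a) * ((r+1).choose a : MvPolynomial (Fin 2) ℤ) := by
    rw [add_comm 1 (X 0 : MvPolynomial (Fin 2) ℤ), add_pow]
  have h2 : ((1 + X 1 - X 0 : MvPolynomial (Fin 2) ℤ)) ^ (r+1)
      = ∑ b ∈ range (r+2), (X 1 - X 0) ^ b * 1 ^ (r+1-b) * ((r+1).choose b : MvPolynomial (Fin 2) ℤ) := by
    rw [show (1 + X 1 - X 0 : MvPolynomial (Fin 2) ℤ) = (X 1 - X 0) + 1 by ring, add_pow]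
  calc (1 + X 0) ^ (r + 1) * (1 + X 1) * (1 + X 1 - X 0) ^ (r + 1)
      = ((1 + X 0 : MvPolynomial (Fin 2) ℤ)) ^ (r+1) * ((1 + X 1 - X 0 : MvPolynomial (Fin 2) ℤ)) ^ (r+1) * (1 + X 1) := by ring
    _ = (∑ a ∈ range (r+2), X 0 ^ a * 1 ^ (r+1-a) * ((r+1).choose a : MvPolynomial (Fin 2) ℤ))
        * (∑ b ∈ range (r+2), (X 1 - X 0) ^ b * 1 ^ (r+1-b) * ((r+1).choose b : MvPolynomial (Fin 2) ℤ)) * (1 + X 1) := by rw [h1, h2]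
    _ = ∑ a ∈ range (r+2), ∑ b ∈ range (r+2),
          (X 0 ^ a * 1 ^ (r+1-a) * ((r+1).choose a : MvPolynomial (Fin 2) ℤ))
          * ((X 1 - X 0) ^ b * 1 ^ (r+1-b) * ((r+1).choose b : MvPolynomial (Fin 2) ℤ)) * (1 + X 1) := by
        rw [Finset.sum_mul_sum, Finset.sum_mul]
        exact Finset.sum_congr rfl fun a _ => by rw [Finset.sum_mul]
    _ = ∑ a ∈ range (r+2), ∑ b ∈ range (r+2), (MM r a b + MM r a b * X 1) := by
        refine Finset.sum_congr rfl fun a _ => Finset.sum_congr rfl fun b _ => ?_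
        unfold MM; push_cast; ring

lemma aux_E (r : ℕ) :
    homogeneousComponent (2*r)
      ((1 + X 0) ^ (r + 1) * (1 + X 1) * (1 + X 1 - X 0) ^ (r + 1) : MvPolynomial (Fin 2) ℤ)
    = (∑ p ∈ (range (r+2) ×ˢ range (r+2)).filter (fun p => 2*r = p.1 + p.2), MM r p.1 p.2)
      + ∑ p ∈ (range (r+2) ×ˢ range (r+2)).filter (fun p => 2*r = p.1 + p.2 + 1), MM r p.1 p.2 * X 1 := by
  rw [aux_expand, map_sum]
  have step : ∀ a ∈ range (r+2),
      homogeneousComponent (2*r) (∑ b ∈ range (r+2), (MM r a b + MM r a b * X 1))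
      = ∑ b ∈ range (r+2),
          ((if 2*r = a + b then MM r a b else 0) + (if 2*r = a + b + 1 then MM r a b * X 1 else 0)) := by
    intro a _
    rw [map_sum]
    refine Finset.sum_congr rfl fun b _ => ?_
    rw [map_add,
      homogeneousComponent_of_mem ((mem_homogeneousSubmodule _ _).mpr (aux_hom_MM r a b)),
      homogeneousComponent_of_mem ((mem_homogeneousSubmodule _ _).mpr
        ((aux_hom_MM r a b).mul (isHomogeneous_X _ 1)))]
  rw [Finset.sum_congr rfl step]
  simp only [Finset.sum_add_distrib]
  rw [← Finset.sum_product', ← Finset.sum_product', ← Finset.sum_filter, ← Finset.sum_filter]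

lemma aux_T0 (r : ℕ) (hr : 0 < r) :
    (range (r+2) ×ˢ range (r+2)).filter (fun p => 2*r = p.1 + p.2)
    = {(r-1, r+1), (r, r), (r+1, r-1)} := by
  ext ⟨a, b⟩
  simp only [Finset.mem_filter, Finset.mem_product, Finset.mem_range, Finset.mem_insert,
    Finset.mem_singleton, Prod.mk.injEq]
  omega

lemma aux_T1 (s : ℕ) :
    (range (s+2+2) ×ˢ range (s+2+2)).filter (fun p => 2*(s+2) = p.1 + p.2 + 1)
    = {(s, s+3), (s+1, s+2), (s+2, s+1), (s+3, s)} := by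
  ext ⟨a, b⟩
  simp only [Finset.mem_filter, Finset.mem_product, Finset.mem_range, Finset.mem_insert,
    Finset.mem_singleton, Prod.mk.injEq]
  omega

lemma aux_T1_one :
    (range (1+2) ×ˢ range (1+2)).filter (fun p => 2*1 = p.1 + p.2 + 1)
    = {(0, 1), (1, 0)} := by
  ext ⟨a, b⟩
  simp only [Finset.mem_filter, Finset.mem_product, Finset.mem_range, Finset.mem_insert,
    Finset.mem_singleton, Prod.mk.injEq]
  omega

/-- In `A = ℤ[h,ξ]/(h^{r+1}, ξ(ξ−h)^{r+1})`, the degree `2r+1` part of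
`(1+h)^{r+1}(1+ξ)(1+ξ−h)^{r+1}(2h−ξ)`, i.e. `c_{2r}(X)·(2h−ξ)`, equals
`−(r+1)·h^r ξ^{r+1}`. -/
theorem stmt_8 (r : ℕ) (hr : 0 < r) :
    letI h : MvPolynomial (Fin 2) ℤ := X 0
    letI ξ : MvPolynomial (Fin 2) ℤ := X 1
    letI I : Ideal (MvPolynomial (Fin 2) ℤ) :=
      Ideal.span {h ^ (r + 1), ξ * (ξ - h) ^ (r + 1)}
    Ideal.Quotient.mk I
        (MvPolynomial.homogeneousComponent (2 * r)
            ((1 + h) ^ (r + 1) * (1 + ξ) * (1 + ξ - h) ^ (r + 1))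
          * (2 * h - ξ))
      = Ideal.Quotient.mk I (-((r : MvPolynomial (Fin 2) ℤ) + 1)
          * h ^ r * ξ ^ (r + 1)) := by
  rw [aux_E r, aux_T0 r hr]
  rcases Nat.lt_or_ge r 2 with h2 | h2
  · have h1 : r = 1 := by omega
    subst h1
    rw [aux_T1_one]
    rw [Finset.sum_insert (by decide), Finset.sum_insert (by decide), Finset.sum_singleton,
      Finset.sum_insert (by decide), Finset.sum_singleton]
    simp only [MM, show (1:ℕ)-1 = 0 from rfl, show (1:ℕ)+1 = 2 from rfl,
      show Nat.choose 2 0 = 1 from rfl, show Nat.choose 2 1 = 2 from rfl,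
      show Nat.choose 2 2 = 1 from rfl]
    set K := Ideal.Quotient.mk (Ideal.span {(X 0 : MvPolynomial (Fin 2) ℤ) ^ (1 + 1),
      X 1 * (X 1 - X 0) ^ (1 + 1)}) with hK
    have e1 : K (X 0) ^ (1+1) = 0 := by
      rw [← map_pow, hK, Ideal.Quotient.eq_zero_iff_mem]
      exact Ideal.subset_span (Set.mem_insert _ _)
    have e2 : K (X 1) * (K (X 1) - K (X 0)) ^ (1+1) = 0 := by
      rw [← map_sub, ← map_pow, ← map_mul, hK, Ideal.Quotient.eq_zero_iff_mem]
      exact Ideal.subset_span (Set.mem_insert_of_mem _ rfl)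
    simp only [map_mul, map_add, map_sub, map_pow, map_neg, map_natCast, map_ofNat, map_one]
    push_cast
    linear_combination (9 * K (X 1) - 4 * K (X 0)) * e1 + (-3 : ℤ) * e2
  · obtain ⟨s, rfl⟩ : ∃ s, r = s + 2 := ⟨r - 2, by omega⟩
    rw [aux_T1 s]
    simp only [show s+2-1 = s+1 from by omega, show s+2+1 = s+3 from by omega]
    rw [Finset.sum_insert (by simp only [Finset.mem_insert, Finset.mem_singleton, Prod.mk.injEq]; omega),
      Finset.sum_insert (by simp only [Finset.mem_singleton, Prod.mk.injEq]; omega),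
      Finset.sum_singleton,
      Finset.sum_insert (by simp only [Finset.mem_insert, Finset.mem_singleton, Prod.mk.injEq]; omega),
      Finset.sum_insert (by simp only [Finset.mem_insert, Finset.mem_singleton, Prod.mk.injEq]; omega),
      Finset.sum_insert (by simp only [Finset.mem_singleton, Prod.mk.injEq]; omega),
      Finset.sum_singleton]
    simp only [MM, show (s+3).choose (s+3) = 1 from Nat.choose_self _,
      show (s+3).choose (s+2) = s+3 from Nat.choose_succ_self_right _]
    set K := Ideal.Quotient.mk (Ideal.span {(X 0 : MvPolynomial (Fin 2) ℤ) ^ (s + 2 + 1),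
      X 1 * (X 1 - X 0) ^ (s + 2 + 1)}) with hK
    have e1 : K (X 0) ^ (s+2+1) = 0 := by
      rw [← map_pow, hK, Ideal.Quotient.eq_zero_iff_mem]
      exact Ideal.subset_span (Set.mem_insert _ _)
    have e2 : K (X 1) * (K (X 1) - K (X 0)) ^ (s+2+1) = 0 := by
      rw [← map_sub, ← map_pow, ← map_mul, hK, Ideal.Quotient.eq_zero_iff_mem]
      exact Ideal.subset_span (Set.mem_insert_of_mem _ rfl)
    have e2' : (K (X 1) - K (X 0)) ^ (s+4) = -(K (X 0) * (K (X 1) - K (X 0)) ^ (s+3)) := by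
      linear_combination e2
    have e3 : (K (X 1) - K (X 0)) ^ (s+5) = K (X 0) ^ 2 * (K (X 1) - K (X 0)) ^ (s+3) := by
      linear_combination (K (X 1) - 2 * K (X 0)) * e2
    have e4 : K (X 0) ^ (s+2) * K (X 1) ^ (s+3) = K (X 0) ^ (s+2) * (K (X 1) - K (X 0)) ^ (s+3) :=
      aux_pow_sub _ _ _ e1 (s+3)
    have hcnat : 2 * ((s+2+1).choose (s+1)) = (s+3) * (s+2) := by
      have h1 : (s+2+1).choose (s+1) = (s+3).choose 2 := by
        have := Nat.choose_symm (show 2 ≤ s+3 by omega)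
        rwa [show s+3-2 = s+1 from by omega] at this
      rw [h1, aux_two_mul_choose_two, show s+3-1 = s+2 from by omega]
    have hc : ((2 * ((s+2+1).choose (s+1)) : ℕ) :
        MvPolynomial (Fin 2) ℤ ⧸ Ideal.span {(X 0 : MvPolynomial (Fin 2) ℤ) ^ (s + 2 + 1),
          X 1 * (X 1 - X 0) ^ (s + 2 + 1)})
        = (((s+3) * (s+2) : ℕ) : _) := by rw [hcnat]
    push_cast at hc
    simp only [map_mul, map_add, map_sub, map_pow, map_neg, map_natCast, map_ofNat, map_one]
    push_cast
    set c1 : MvPolynomial (Fin 2) ℤ ⧸ Ideal.span {(X 0 : MvPolynomial (Fin 2) ℤ) ^ (s + 2 + 1),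
      X 1 * (X 1 - X 0) ^ (s + 2 + 1)} := (((s+2+1).choose (s+1) : ℕ) : MvPolynomial (Fin 2) ℤ ⧸ Ideal.span {(X 0 : MvPolynomial (Fin 2) ℤ) ^ (s + 2 + 1), X 1 * (X 1 - X 0) ^ (s + 2 + 1)}) with hc1
    set c0 : MvPolynomial (Fin 2) ℤ ⧸ Ideal.span {(X 0 : MvPolynomial (Fin 2) ℤ) ^ (s + 2 + 1),
      X 1 * (X 1 - X 0) ^ (s + 2 + 1)} := (((s+2+1).choose s : ℕ) : MvPolynomial (Fin 2) ℤ ⧸ Ideal.span {(X 0 : MvPolynomial (Fin 2) ℤ) ^ (s + 2 + 1), X 1 * (X 1 - X 0) ^ (s + 2 + 1)}) with hc0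
    set sQ : MvPolynomial (Fin 2) ℤ ⧸ Ideal.span {(X 0 : MvPolynomial (Fin 2) ℤ) ^ (s + 2 + 1), X 1 * (X 1 - X 0) ^ (s + 2 + 1)} := ((s : ℕ) : MvPolynomial (Fin 2) ℤ ⧸ Ideal.span {(X 0 : MvPolynomial (Fin 2) ℤ) ^ (s + 2 + 1), X 1 * (X 1 - X 0) ^ (s + 2 + 1)}) with hsQ
    linear_combination
      (((sQ+3)*(sQ+3) - c1 + c1*(sQ+3) - c0) * (K (X 1) - K (X 0))^(s+2)
        + (c1 + c1*(sQ+3)) * K (X 0) * (K (X 1) - K (X 0))^(s+1)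
        + c0 * K (X 0)^2 * (K (X 1) - K (X 0))^s) * e1
      + (-((c1 + c1*(sQ+3)) * K (X 0)^(s+1))) * e2'
      + (-(c0 * K (X 0)^s)) * e3
      + (sQ+3) * e4
      + (K (X 0)^(s+2) * (K (X 1) - K (X 0))^(s+3)) * hc
end
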